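/- Let U be an open connected subset of ℂ, and suppose U is not full (its complement has a bounded connected component). If U is exhausted by an increasing sequence of open connected sets S₀ ⊆ S₁ ⊆ ... with U = ⋃ S_k, then there exists k such that S_k is not full. -/

import Mathlib

open Set Bornology Metric

/-- A subset of `ℂ` is full if its complement has no bounded connected components. -/
def IsFull (S : Set ℂ) : Prop :=
  ∀ z ∈ Sᶜ, ¬ IsBounded (connectedComponentIn Sᶜ z)

/-- If an open connected set `U ⊆ ℂ` is not full and is exhausted by an increasing
sequence of open connected sets `S k`, then some `S k` is not full. -/
theorem exists_not_full_of_exhaustion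
    (U : Set ℂ) (hUo : IsOpen U) (hUc : IsConnected U) (hUnf : ¬ IsFull U)
    (S : ℕ → Set ℂ) (hSo : ∀ k, IsOpen (S k)) (hSc : ∀ k, IsConnected (S k))
    (hmono : Monotone S) (hunion : U = ⋃ k, S k) :
    ∃ k, ¬ IsFull (S k) := by
  unfold IsFull at hUnf
  push_neg at hUnf
  obtain ⟨z, hz, hb⟩ := hUnf
  set C := connectedComponentIn Uᶜ z with hC
  obtain ⟨R, hCR⟩ := hb.subset_ball z
  have hzC : z ∈ C := mem_connectedComponentIn hz
  have hR : 0 < R := by simpa using hCR hzC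
  -- the compact set F
  set F : Set ℂ := Uᶜ ∩ closedBall z R with hF
  have hFcl : IsClosed F := (hUo.isClosed_compl).inter isClosed_closedBall
  have hFcomp : IsCompact F :=
    Metric.isCompact_of_isClosed_isBounded hFcl (isBounded_closedBall.subset inter_subset_right)
  have hzF : z ∈ F := ⟨hz, mem_closedBall_self hR.le⟩
  have hCF : C ⊆ F := fun w hw => ⟨connectedComponentIn_subset _ _ hw, ball_subset_closedBall (hCR hw)⟩
  have hCFc : connectedComponentIn F z = C := by
    apply Subset.antisymm
    · exact connectedComponentIn_mono z inter_subset_left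
    · exact isPreconnected_connectedComponentIn.subset_connectedComponentIn hzC hCF
  -- work in the compact space F
  haveI : CompactSpace F := isCompact_iff_compactSpace.mp hFcomp
  set x₀ : F := ⟨z, hzF⟩ with hx₀
  -- the sphere part of F, as a set of the subtype
  set K : Set F := Subtype.val ⁻¹' (sphere z R) with hK
  have hKcl : IsClosed K := isClosed_sphere.preimage continuous_subtype_val
  have hKcomp : IsCompact K := hKcl.isCompact
  have hccK : connectedComponent x₀ ∩ K = ∅ := by
    rw [eq_empty_iff_forall_notMem]
    rintro ⟨w, hwF⟩ ⟨hw1, hw2⟩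
    have : w ∈ C := by
      rw [← hCFc, connectedComponentIn_eq_image hzF]
      exact ⟨⟨w, hwF⟩, hw1, rfl⟩
    have := hCR this
    simp only [mem_ball, mem_sphere_iff_norm] at this hw2
    rw [mem_preimage, mem_sphere] at hw2
    exact absurd hw2 (ne_of_lt this)
  -- find a clopen set A' containing x₀ and disjoint from K
  obtain ⟨A', hA'clopen, hx₀A', hA'K⟩ :
      ∃ A' : Set F, IsClopen A' ∧ x₀ ∈ A' ∧ A' ∩ K = ∅ := by
    by_contra hcon
    push_neg at hcon
    have H := hKcomp.inter_iInter_nonempty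
      (fun s : { s : Set F // IsClopen s ∧ x₀ ∈ s } => (s : Set F))
      (fun s => s.2.1.1) ?_
    · rw [← connectedComponent_eq_iInter_isClopen x₀, inter_comm] at H
      rw [hccK] at H
      exact H.ne_empty rfl
    · intro u
      rw [← not_disjoint_iff_nonempty_inter]
      intro hdisj
      have hclopen : IsClopen (⋂ s ∈ u, (s : Set F)) :=
        isClopen_biInter_finset fun s _ => s.2.1
      have hmem : x₀ ∈ ⋂ s ∈ u, (s : Set F) := mem_iInter₂.2 fun s _ => s.2.2
      have := hcon _ hclopen hmem
      rw [← not_disjoint_iff_nonempty_inter] at this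
      exact this (hdisj.symm.mono_right (by exact fun x hx => by simpa using hx))
  -- push down to ℂ
  set A : Set ℂ := Subtype.val '' A' with hA
  have hAF : A ⊆ F := by rintro w ⟨⟨w', hw'⟩, _, rfl⟩; exact hw'
  have hzA : z ∈ A := ⟨x₀, hx₀A', rfl⟩
  have hAcomp : IsCompact A := (hA'clopen.1.isCompact).image continuous_subtype_val
  -- A is open in F: A = V₀ ∩ F for some open V₀
  obtain ⟨V₀, hV₀o, hV₀⟩ : ∃ V₀ : Set ℂ, IsOpen V₀ ∧ A' = Subtype.val ⁻¹' V₀ := by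
    obtain ⟨V₀, hV₀o, hV₀⟩ := isOpen_induced_iff.mp hA'clopen.2
    exact ⟨V₀, hV₀o, hV₀.symm⟩
  have hAeq : A = V₀ ∩ F := by
    ext w
    constructor
    · rintro ⟨⟨w', hw'⟩, hmem, rfl⟩
      rw [hV₀] at hmem
      exact ⟨hmem, hw'⟩
    · rintro ⟨hwV, hwF⟩
      exact ⟨⟨w, hwF⟩, by rw [hV₀]; exact hwV, rfl⟩
  -- A avoids the sphere, hence A ⊆ ball z R
  have hAball : A ⊆ ball z R := by
    rintro w ⟨⟨w', hw'⟩, hmem, rfl⟩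
    have hsph : w' ∉ sphere z R := by
      intro hs
      have : (⟨w', hw'⟩ : F) ∈ A' ∩ K := ⟨hmem, hs⟩
      rw [hA'K] at this
      exact this
    have : w' ∈ closedBall z R := hw'.2
    rw [mem_closedBall] at this
    rw [mem_ball]
    rcases lt_or_eq_of_le this with h | h
    · exact h
    · exact absurd (by rwa [mem_sphere]) hsph
  -- Uᶜ \ A is closed
  have hsplit : Uᶜ \ A = (F \ A) ∪ (Uᶜ ∩ (ball z R)ᶜ) := by
    ext w
    constructor
    · rintro ⟨hwU, hwA⟩
      by_cases hwb : w ∈ ball z R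
      · exact Or.inl ⟨⟨hwU, ball_subset_closedBall hwb⟩, hwA⟩
      · exact Or.inr ⟨hwU, hwb⟩
    · rintro (⟨⟨hwU, _⟩, hwA⟩ | ⟨hwU, hwb⟩)
      · exact ⟨hwU, hwA⟩
      · exact ⟨hwU, fun h => hwb (hAball h)⟩
  have hDcl : IsClosed (Uᶜ \ A) := by
    rw [hsplit]
    refine IsClosed.union ?_ ((hUo.isClosed_compl).inter isOpen_ball.isClosed_compl)
    have : F \ A = F ∩ V₀ᶜ := by
      rw [hAeq]
      ext w
      simp only [mem_diff, mem_inter_iff, mem_compl_iff]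
      tauto
    rw [this]
    exact hFcl.inter hV₀o.isClosed_compl
  -- find the bounded open V with A ⊆ V and closure V disjoint from Uᶜ \ A
  set W : Set ℂ := ball z R ∩ (Uᶜ \ A)ᶜ with hW
  have hWo : IsOpen W := isOpen_ball.inter hDcl.isOpen_compl
  have hAW : A ⊆ W := fun w hw => ⟨hAball hw, fun h => h.2 hw⟩
  obtain ⟨δ, hδ, hthick⟩ := hAcomp.exists_thickening_subset_open hWo hAW
  set V : Set ℂ := thickening (δ/2) A with hV
  have hVo : IsOpen V := isOpen_thickening
  have hAV : A ⊆ V := self_subset_thickening (by linarith) A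
  have hclV : closure V ⊆ W := by
    refine Subset.trans ?_ hthick
    refine (closure_thickening_subset_cthickening _ _).trans ?_
    exact cthickening_subset_thickening' hδ (by linarith) A
  have hVbdd : IsBounded V := (isBounded_ball.subset (hW ▸ inter_subset_left : W ⊆ ball z R)).subset
    ((subset_closure).trans hclV)
  -- frontier V ⊆ U
  have hfU : frontier V ⊆ U := by
    intro w hw
    by_contra hwU
    have hwcl : w ∈ closure V := hw.1
    have hwW : w ∈ W := hclV hwcl
    have hwA : w ∈ A := by
      by_contra hwA
      exact hwW.2 ⟨hwU, hwA⟩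
    exact hw.2 (by rw [hVo.interior_eq]; exact hAV hwA)
  -- frontier V is compact, covered by S k's
  have hfcomp : IsCompact (frontier V) :=
    Metric.isCompact_of_isClosed_isBounded isClosed_frontier
      (hVbdd.closure.subset (frontier_subset_closure))
  have hcover : frontier V ⊆ ⋃ k, S k := hunion ▸ hfU
  obtain ⟨t, ht⟩ := hfcomp.elim_finite_subcover S hSo hcover
  set k := t.sup id with hk
  have hfSk : frontier V ⊆ S k := by
    refine ht.trans ?_
    refine iUnion₂_subset fun i hi => hmono ?_
    exact Finset.le_sup (f := id) hi
  refine ⟨k, ?_⟩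
  unfold IsFull
  push_neg
  have hSkU : S k ⊆ U := hunion ▸ subset_iUnion S k
  have hzSk : z ∈ (S k)ᶜ := fun h => hz (hSkU h)
  refine ⟨z, hzSk, ?_⟩
  have hDV : connectedComponentIn (S k)ᶜ z ⊆ V := by
    have hpre : IsPreconnected (connectedComponentIn (S k)ᶜ z) :=
      isPreconnected_connectedComponentIn
    refine hpre.subset_left_of_subset_union hVo isClosed_closure.isOpen_compl
      (disjoint_compl_right.mono_left subset_closure) ?_
      ⟨z, mem_connectedComponentIn hzSk, hAV hzA⟩
    intro w hw
    by_cases hwV : w ∈ V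
    · exact Or.inl hwV
    · refine Or.inr fun hwcl => ?_
      have : w ∈ frontier V := ⟨hwcl, by rwa [hVo.interior_eq]⟩
      exact connectedComponentIn_subset _ _ hw (hfSk this)
  exact hVbdd.subset hDV
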